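/- For every m ≥ 1, the first five occurrences of E_{2,m} in the period-doubling sequence D start at positions 2^m + 1, 3·2^{m−1} + 1, 5·2^m + 1, 11·2^{m−1} + 1 and 7·2^m + 1; consequently r_0(E_{2,m}) = A_m, r_1(E_{2,m}) = r_3(E_{2,m}) = A_{m−1}, r_2(E_{2,m}) = A_{m−1} A_m B_{m+1}, and r_4(E_{2,m}) = B_m B_{m−1}. -/

import Mathlib

/-- The alphabet: letters a, b (for the period-doubling sequence) and c (used by Θ₂). -/
inductive Letter : Type
  | a | b | c
deriving DecidableEq, Repr

open Letter

/-- The period-doubling substitution σ : a ↦ ab, b ↦ aa, extended to words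
(the extra letter c is left untouched; it is never produced). -/
def sigmaw : List Letter → List Letter :=
  fun w => w.flatMap fun x => match x with
    | .a => [.a, .b]
    | .b => [.a, .a]
    | .c => [.c]

/-- A_m = σ^m(a). -/
def A (m : ℕ) : List Letter := sigmaw^[m] [.a]

/-- B_m = σ^m(b). -/
def B (m : ℕ) : List Letter := sigmaw^[m] [.b]

/-- δ_m, the last letter of A_m. -/
def delta (m : ℕ) : Letter := (A m).getLastD .a

/-- The period-doubling sequence D, as a function giving its (n+1)-st letter
(0-indexed); it is the fixed point of σ beginning with a, and A_{n+1} is a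
prefix of it of length 2^{n+1} > n. -/
def D (n : ℕ) : Letter := (A (n + 1)).getD n .a

/-- The finite segment D[i .. i+len−1] of the period-doubling sequence,
with 1-based starting position i. -/
def Dseg (i len : ℕ) : List Letter := (List.range len).map fun k => D (i - 1 + k)

/-- u occurs in the finite word w at (1-based) position i. -/
def OccursAt {α : Type*} (u w : List α) (i : ℕ) : Prop :=
  1 ≤ i ∧ i - 1 + u.length ≤ w.length ∧ (w.drop (i - 1)).take u.length = u

/-- u is a factor of the finite word w. -/
def IsFactor {α : Type*} (u w : List α) : Prop := ∃ i, OccursAt u w i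

/-- u occurs in the period-doubling sequence D at (1-based) position i. -/
def DOccursAt (u : List Letter) (i : ℕ) : Prop := 1 ≤ i ∧ Dseg i u.length = u

/-- u is a factor of the period-doubling sequence D. -/
def FactorD (u : List Letter) : Prop := ∃ i, DOccursAt u i

/-- L(u,p): the starting position of the p-th occurrence (p ≥ 1) of u in D. -/
noncomputable def L (u : List Letter) (p : ℕ) : ℕ := Nat.nth (DOccursAt u) (p - 1)

/-- r_p(u): the p-th return word of u (p ≥ 1), i.e. D[L(u,p) .. L(u,p+1)−1];
r_0(u) is the prefix of D preceding the first occurrence of u. -/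
noncomputable def r (u : List Letter) (p : ℕ) : List Letter :=
  if p = 0 then Dseg 1 (L u 1 - 1) else Dseg (L u p) (L u (p + 1) - L u p)

/-- The morphism τ₁ : a ↦ a, b ↦ bb, extended to words. -/
def tau1 : List Letter → List Letter :=
  fun w => w.flatMap fun x => match x with
    | .a => [.a]
    | .b => [.b, .b]
    | .c => [.c]

/-- The morphism τ₂ : a ↦ ab, b ↦ acac, extended to words. -/
def tau2 : List Letter → List Letter :=
  fun w => w.flatMap fun x => match x with
    | .a => [.a, .b]
    | .b => [.a, .c, .a, .c]
    | .c => [.c]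

/-- Θ₁[p], the p-th letter (p ≥ 1) of Θ₁ = τ₁(D): since |τ₁(w)| ≥ |w|, the p-th
letter of Θ₁ is the p-th letter of the image of the length-p prefix of D. -/
def Theta1 (p : ℕ) : Letter := (tau1 (Dseg 1 p)).getD (p - 1) .a

/-- Θ₂[p], the p-th letter (p ≥ 1) of Θ₂ = τ₂(D). -/
def Theta2 (p : ℕ) : Letter := (tau2 (Dseg 1 p)).getD (p - 1) .a

/-- The envelope word E_{1,m} = A_m with its last letter δ_m deleted. -/
def E1 (m : ℕ) : List Letter := (A m).dropLast

/-- The envelope word E_{2,m} = B_m B_{m−1} with its last letter δ_m deleted. -/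
def E2 (m : ℕ) : List Letter := (B m ++ B (m - 1)).dropLast

/-- Enumeration of the envelope words in the order
E_{1,1} ⊏ E_{2,1} ⊏ E_{1,2} ⊏ E_{2,2} ⊏ …. -/
def Eword (k : ℕ) : List Letter := if k % 2 = 0 then E1 (k / 2 + 1) else E2 (k / 2 + 1)

/-- Env(u): the ⊏-least envelope word having u as a factor. -/
noncomputable def Env (u : List Letter) : List Letter :=
  Eword (sInf {k | IsFactor u (Eword k)})

/-- The letterwise complement exchanging a and b. -/
def comp : Letter → Letter
  | .a => .b
  | .b => .a
  | .c => .c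

section Aux
open Letter List

/-! ### Basic facts about `sigmaw` -/

lemma sigmaw_nil : sigmaw [] = [] := rfl
lemma sigmaw_cons_a (w : List Letter) : sigmaw (.a :: w) = .a :: .b :: sigmaw w := rfl
lemma sigmaw_cons_b (w : List Letter) : sigmaw (.b :: w) = .a :: .a :: sigmaw w := rfl
lemma sigmaw_cons_c (w : List Letter) : sigmaw (.c :: w) = .c :: sigmaw w := rfl

lemma sigmaw_append (u v : List Letter) : sigmaw (u ++ v) = sigmaw u ++ sigmaw v :=
  List.flatMap_append ..

lemma sigmaw_iter_append (k : ℕ) (u v : List Letter) :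
    sigmaw^[k] (u ++ v) = sigmaw^[k] u ++ sigmaw^[k] v := by
  induction k generalizing u v with
  | zero => rfl
  | succ k ih => simp [Function.iterate_succ_apply, sigmaw_append, ih]

/-- Words not containing the letter c. -/
def Clean (w : List Letter) : Prop := Letter.c ∉ w

lemma Clean.cons_iff {x : Letter} {w : List Letter} :
    Clean (x :: w) ↔ x ≠ .c ∧ Clean w := by
  simp [Clean, eq_comm]

lemma Clean.sig {w : List Letter} (h : Clean w) : Clean (sigmaw w) := by
  induction w with
  | nil => simp [Clean, sigmaw_nil]
  | cons x w ih =>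
    rw [Clean.cons_iff] at h
    cases x with
    | a => rw [sigmaw_cons_a]; simp [Clean.cons_iff, ih h.2, (ih h.2 :)]
    | b => rw [sigmaw_cons_b]; simp [Clean.cons_iff, ih h.2, (ih h.2 :)]
    | c => exact absurd rfl h.1

lemma Clean.length_sigmaw {w : List Letter} (h : Clean w) :
    (sigmaw w).length = 2 * w.length := by
  induction w with
  | nil => rfl
  | cons x w ih =>
    rw [Clean.cons_iff] at h
    cases x with
    | a => rw [sigmaw_cons_a]; simp [ih h.2]; ring
    | b => rw [sigmaw_cons_b]; simp [ih h.2]; ring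
    | c => exact absurd rfl h.1

lemma sig_getD_even {w : List Letter} (hw : Clean w) {k : ℕ} (hk : k < w.length) :
    (sigmaw w).getD (2 * k) .a = .a := by
  induction w generalizing k with
  | nil => simp at hk
  | cons x w ih =>
    rw [Clean.cons_iff] at hw
    cases k with
    | zero => cases x with
      | a => rfl
      | b => rfl
      | c => exact absurd rfl hw.1
    | succ k =>
      have hk' : k < w.length := by simpa using hk
      have h2 : 2 * (k + 1) = 2 * k + 1 + 1 := by ring
      cases x with
      | a => rw [sigmaw_cons_a, h2, List.getD_cons_succ, List.getD_cons_succ]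
             exact ih hw.2 hk'
      | b => rw [sigmaw_cons_b, h2, List.getD_cons_succ, List.getD_cons_succ]
             exact ih hw.2 hk'
      | c => exact absurd rfl hw.1

lemma sig_getD_odd {w : List Letter} (hw : Clean w) {k : ℕ} (hk : k < w.length) :
    (sigmaw w).getD (2 * k + 1) .a = comp (w.getD k .a) := by
  induction w generalizing k with
  | nil => simp at hk
  | cons x w ih =>
    rw [Clean.cons_iff] at hw
    cases k with
    | zero => cases x with
      | a => rfl
      | b => rfl
      | c => exact absurd rfl hw.1
    | succ k =>
      have hk' : k < w.length := by simpa using hk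
      have h2 : 2 * (k + 1) + 1 = 2 * k + 1 + 1 + 1 := by ring
      cases x with
      | a => rw [sigmaw_cons_a, h2, List.getD_cons_succ, List.getD_cons_succ,
                 List.getD_cons_succ]
             exact ih hw.2 hk'
      | b => rw [sigmaw_cons_b, h2, List.getD_cons_succ, List.getD_cons_succ,
                 List.getD_cons_succ]
             exact ih hw.2 hk'
      | c => exact absurd rfl hw.1

lemma sigmaw_injOn {u v : List Letter} (hu : Clean u) (hv : Clean v)
    (h : sigmaw u = sigmaw v) : u = v := by
  induction u generalizing v with
  | nil =>
    cases v with
    | nil => rfl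
    | cons y v =>
      rw [Clean.cons_iff] at hv
      cases y with
      | a => rw [sigmaw_nil, sigmaw_cons_a] at h; exact absurd h (by simp)
      | b => rw [sigmaw_nil, sigmaw_cons_b] at h; exact absurd h (by simp)
      | c => exact absurd rfl hv.1
  | cons x u ih =>
    rw [Clean.cons_iff] at hu
    cases v with
    | nil =>
      cases x with
      | a => rw [sigmaw_nil, sigmaw_cons_a] at h; exact absurd h (by simp)
      | b => rw [sigmaw_nil, sigmaw_cons_b] at h; exact absurd h (by simp)
      | c => exact absurd rfl hu.1
    | cons y v =>
      rw [Clean.cons_iff] at hv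
      cases x with
      | c => exact absurd rfl hu.1
      | a => cases y with
        | a =>
          rw [sigmaw_cons_a, sigmaw_cons_a] at h
          simp only [List.cons.injEq] at h
          rw [ih hu.2 hv.2 h.2.2]
        | b => rw [sigmaw_cons_a, sigmaw_cons_b] at h; simp at h
        | c => exact absurd rfl hv.1
      | b => cases y with
        | a => rw [sigmaw_cons_b, sigmaw_cons_a] at h; simp at h
        | b =>
          rw [sigmaw_cons_b, sigmaw_cons_b] at h
          simp only [List.cons.injEq] at h
          rw [ih hu.2 hv.2 h.2.2]
        | c => exact absurd rfl hv.1

/-! ### A, B -/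

lemma A_succ_sig (m : ℕ) : A (m + 1) = sigmaw (A m) :=
  Function.iterate_succ_apply' _ _ _

lemma B_succ_sig (m : ℕ) : B (m + 1) = sigmaw (B m) :=
  Function.iterate_succ_apply' _ _ _

lemma clean_A (m : ℕ) : Clean (A m) := by
  induction m with
  | zero => simp [Clean, _root_.A]
  | succ m ih => rw [A_succ_sig]; exact ih.sig

lemma clean_B (m : ℕ) : Clean (B m) := by
  induction m with
  | zero => simp [Clean, _root_.B]
  | succ m ih => rw [B_succ_sig]; exact ih.sig

lemma length_A (m : ℕ) : (A m).length = 2 ^ m := by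
  induction m with
  | zero => rfl
  | succ m ih => rw [A_succ_sig, (clean_A m).length_sigmaw, ih]; ring

lemma length_B (m : ℕ) : (B m).length = 2 ^ m := by
  induction m with
  | zero => rfl
  | succ m ih => rw [B_succ_sig, (clean_B m).length_sigmaw, ih]; ring

lemma A_succ (m : ℕ) : A (m + 1) = A m ++ B m := by
  induction m with
  | zero => rfl
  | succ m ih =>
    rw [A_succ_sig (m+1), ih, sigmaw_append, ← A_succ_sig, ← B_succ_sig, ih, List.append_assoc]

/-! ### Values of D -/

lemma getD_A_stable {M M' n : ℕ} (hM : M ≤ M') (hn : n < 2 ^ M) :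
    (A M).getD n .a = (A M').getD n .a := by
  induction M' with
  | zero => interval_cases M; rfl
  | succ M' ih =>
    rcases Nat.lt_or_ge M (M' + 1) with h | h
    · have h' : M ≤ M' := by omega
      rw [ih h', A_succ, List.getD_append]
      rw [length_A]
      calc n < 2 ^ M := hn
        _ ≤ 2 ^ M' := Nat.pow_le_pow_right (by norm_num) h'
    · have : M = M' + 1 := by omega
      subst this; rfl

lemma D_eq {M n : ℕ} (hn : n < 2 ^ M) : D n = (A M).getD n .a := by
  rcases Nat.lt_or_ge n (2 ^ (n + 1)) with h | h
  · unfold D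
    rcases Nat.le_total (n + 1) M with hM | hM
    · exact getD_A_stable hM h
    · exact (getD_A_stable hM hn).symm
  · exact absurd (Nat.lt_two_pow_self (n := n)) (by omega)

lemma D_even (n : ℕ) : D (2 * n) = .a := by
  have h1 : n < 2 ^ (2 * n + 1) :=
    lt_of_lt_of_le (Nat.lt_two_pow_self (n := n)) (Nat.pow_le_pow_right (by norm_num) (by omega))
  have h2 : 2 * n < 2 ^ (2 * n + 2) := by
    have := (clean_A (2 * n + 1)).length_sigmaw
    calc 2 * n < 2 * 2 ^ (2 * n + 1) := by omega
      _ = 2 ^ (2 * n + 2) := by ring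
  rw [D_eq h2, A_succ_sig]
  exact sig_getD_even (clean_A _) (by rw [length_A]; exact h1)

lemma D_odd (n : ℕ) : D (2 * n + 1) = comp (D n) := by
  have h1 : n < 2 ^ (2 * n + 1) :=
    lt_of_lt_of_le (Nat.lt_two_pow_self (n := n)) (Nat.pow_le_pow_right (by norm_num) (by omega))
  have h2 : 2 * n + 1 < 2 ^ (2 * n + 2) := by
    have : 2 ^ (2*n+2) = 2 * 2 ^ (2*n+1) := by ring
    omega
  rw [D_eq h2, A_succ_sig, sig_getD_odd (clean_A _) (by rw [length_A]; exact h1),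
    D_eq h1]

lemma D_ne_c (n : ℕ) : D n ≠ .c := by
  unfold D
  rcases lt_or_ge n (A (n + 1)).length with h | h
  · rw [List.getD_eq_getElem _ _ h]
    intro hc
    exact (clean_A (n + 1)) (hc ▸ List.getElem_mem h)
  · rw [List.getD_eq_default _ _ h]; simp

lemma D_b_odd {n : ℕ} (h : D n = .b) : ∃ s, n = 2 * s + 1 := by
  rcases Nat.even_or_odd n with ⟨k, hk⟩ | ⟨k, hk⟩
  · rw [hk, show k + k = 2 * k by ring, D_even] at h; simp at h
  · exact ⟨k, hk⟩

/-! ### Segments -/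

lemma Dseg_length (i l : ℕ) : (Dseg i l).length = l := by simp [Dseg]

lemma clean_Dseg (i l : ℕ) : Clean (Dseg i l) := by
  intro hc
  simp only [_root_.Dseg, List.mem_map] at hc
  obtain ⟨k, -, hk⟩ := hc
  exact D_ne_c _ hk

lemma Dseg_snoc (i l : ℕ) : Dseg i (l + 1) = Dseg i l ++ [D (i - 1 + l)] := by
  simp [Dseg, List.range_succ]

lemma Dseg_getD {i l k : ℕ} (hk : k < l) : (Dseg i l).getD k .a = D (i - 1 + k) := by
  rw [List.getD_eq_getElem _ _ (by simpa [Dseg_length] using hk)]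
  simp [Dseg]

lemma Dseg_sig (s l : ℕ) : Dseg (2 * s + 1) (2 * l) = sigmaw (Dseg (s + 1) l) := by
  induction l with
  | zero => simp [Dseg, sigmaw_nil]
  | succ l ih =>
    have h2 : 2 * (l + 1) = 2 * l + 1 + 1 := by ring
    rw [h2, Dseg_snoc, Dseg_snoc, ih, Dseg_snoc, sigmaw_append, List.append_assoc]
    congr 1
    have e1 : 2 * s + 1 - 1 + (2 * l + 1) = 2 * (s + l) + 1 := by omega
    have e2 : 2 * s + 1 - 1 + (2 * l) = 2 * (s + l) := by omega
    have e3 : s + 1 - 1 + l = s + l := by omega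
    rw [e1, e2, e3, D_even, D_odd]
    cases h : D (s + l) with
    | a => rw [sigmaw_cons_a, sigmaw_nil]; rfl
    | b => rw [sigmaw_cons_b, sigmaw_nil]; rfl
    | c => exact absurd h (D_ne_c _)

lemma Dseg_sig_iter (k s l : ℕ) :
    Dseg (2 ^ k * s + 1) (2 ^ k * l) = sigmaw^[k] (Dseg (s + 1) l) := by
  induction k with
  | zero => simp
  | succ k ih =>
    have e1 : 2 ^ (k + 1) * s = 2 * (2 ^ k * s) := by ring
    have e2 : 2 ^ (k + 1) * l = 2 * (2 ^ k * l) := by ring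
    rw [e1, e2, Function.iterate_succ_apply', ← ih, ← Dseg_sig]

end Aux

section Aux2
open Letter List

lemma B_ne_nil (m : ℕ) : B m ≠ [] := by
  intro h
  have hl := length_B m
  rw [h] at hl
  have : 0 < 2 ^ m := Nat.pow_pos (n := m) (by norm_num)
  simp at hl
  omega

lemma sigmaw_dropLast {w : List Letter} (hw : Clean w) (hne : w ≠ []) :
    (sigmaw w).dropLast = sigmaw w.dropLast ++ [Letter.a] := by
  obtain ⟨u, x, rfl⟩ := (w.eq_nil_or_concat').resolve_left hne
  have hx : x ≠ .c := by intro h; exact hw (by simp [h])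
  rw [sigmaw_append, List.dropLast_concat]
  cases x with
  | a =>
    rw [sigmaw_cons_a, sigmaw_nil, List.dropLast_append_of_ne_nil (by simp)]
    rfl
  | b =>
    rw [sigmaw_cons_b, sigmaw_nil, List.dropLast_append_of_ne_nil (by simp)]
    rfl
  | c => exact absurd rfl hx

lemma E2_succ (k : ℕ) : E2 (k + 2) = sigmaw (E2 (k + 1)) ++ [Letter.a] := by
  show (B (k + 2) ++ B (k + 2 - 1)).dropLast = sigmaw ((B (k + 1) ++ B (k + 1 - 1)).dropLast) ++ _
  have h1 : k + 2 - 1 = k + 1 := rfl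
  have h2 : k + 1 - 1 = k := rfl
  rw [h1, h2]
  rw [List.dropLast_append_of_ne_nil (B_ne_nil _),
      List.dropLast_append_of_ne_nil (B_ne_nil _), sigmaw_append,
      List.append_assoc, ← sigmaw_dropLast (clean_B k) (B_ne_nil k),
      ← B_succ_sig, ← B_succ_sig]

lemma E2_length (k : ℕ) : (E2 (k + 1)).length = 3 * 2 ^ k - 1 := by
  show ((B (k + 1) ++ B (k + 1 - 1)).dropLast).length = _
  rw [List.length_dropLast, List.length_append, length_B, length_B]
  have h2 : k + 1 - 1 = k := rfl
  rw [h2, pow_succ]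
  omega

lemma E2_cons (k : ℕ) : ∃ w', E2 (k + 1) = Letter.a :: w' := by
  show ∃ w', (B (k + 1) ++ B (k + 1 - 1)).dropLast = _
  obtain ⟨x, t, hxt⟩ := List.exists_cons_of_ne_nil (B_ne_nil k)
  have hx : x ≠ .c := by intro h; exact (clean_B k) (by rw [hxt, h]; simp)
  have hxa : ∃ t', B (k + 1) = Letter.a :: t' ∧ t' ≠ [] := by
    rw [B_succ_sig, hxt]
    cases x with
    | a => exact ⟨_, sigmaw_cons_a t, by simp⟩
    | b => exact ⟨_, sigmaw_cons_b t, by simp⟩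
    | c => exact absurd rfl hx
  obtain ⟨t', ht', htne⟩ := hxa
  rw [ht']
  rw [List.cons_append, List.dropLast_cons_of_ne_nil (by simp [htne])]
  exact ⟨_, rfl⟩

lemma E2_cons2 (k : ℕ) : ∃ w', E2 (k + 2) = Letter.a :: Letter.b :: w' := by
  obtain ⟨w', hw⟩ := E2_cons k
  rw [E2_succ, hw, sigmaw_cons_a]
  exact ⟨_, rfl⟩

lemma E2_one : E2 1 = [Letter.a, Letter.a] := by decide

/-! ### explicit values of D -/

lemma D_val {j : ℕ} (h : j < 16) : D j = (A 4).getD j .a := D_eq (by norm_num; omega)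

lemma D_lo : D 0 = .a ∧ D 1 = .b ∧ D 2 = .a ∧ D 3 = .a ∧ D 4 = .a ∧ D 5 = .b ∧
    D 6 = .a ∧ D 7 = .b ∧ D 8 = .a ∧ D 9 = .b ∧ D 10 = .a ∧ D 11 = .a ∧
    D 12 = .a ∧ D 13 = .b ∧ D 14 = .a ∧ D 15 = .a := by
  refine ⟨?_, ?_, ?_, ?_, ?_, ?_, ?_, ?_, ?_, ?_, ?_, ?_, ?_, ?_, ?_, ?_⟩ <;>
    · rw [D_val (by norm_num)]; decide

end Aux2

section Aux3
open Letter List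

lemma clean_E2 (m : ℕ) : Clean (E2 m) := by
  intro hc
  have hsub : E2 m <+ B m ++ B (m - 1) := by
    unfold E2; exact List.dropLast_sublist _
  have := hsub.subset hc
  rcases List.mem_append.1 this with h | h
  · exact clean_B m h
  · exact clean_B (m - 1) h

lemma occ1_iff (u : ℕ) :
    Dseg (u + 1) (E2 1).length = E2 1 ↔ (D u = .a ∧ D (u + 1) = .a) := by
  rw [E2_one, show ([Letter.a, Letter.a] : List Letter).length = 2 from rfl,
    show (2 : ℕ) = 1 + 1 from rfl, Dseg_snoc, Dseg_snoc]
  simp [Dseg]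

lemma occ1_char {u : ℕ} (hu : u ≤ 14) :
    (Dseg (u + 1) (E2 1).length = E2 1) ↔ (u = 2 ∨ u = 3 ∨ u = 10 ∨ u = 11 ∨ u = 14) := by
  rw [occ1_iff]
  obtain ⟨d0,d1,d2,d3,d4,d5,d6,d7,d8,d9,d10,d11,d12,d13,d14,d15⟩ := D_lo
  interval_cases u <;> simp_all

lemma occ_step (k t : ℕ) :
    Dseg (t + 1) (E2 (k + 2)).length = E2 (k + 2) ↔
      ∃ s, t = 2 * s ∧ Dseg (s + 1) (E2 (k + 1)).length = E2 (k + 1) := by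
  have hpow : (1 : ℕ) ≤ 2 ^ k := Nat.pow_pos (by norm_num)
  have hL : (E2 (k + 1)).length = 3 * 2 ^ k - 1 := E2_length k
  have hL1 : 1 ≤ (E2 (k + 1)).length := by omega
  have hclean1 : Clean (E2 (k + 1)) := clean_E2 _
  have hlen2 : (E2 (k + 2)).length = 2 * (E2 (k + 1)).length + 1 := by
    rw [E2_succ]
    simp [List.length_append, hclean1.length_sigmaw]
  constructor
  · intro h
    obtain ⟨w', hw'⟩ := E2_cons2 k
    have hb : D (t + 1) = .b := by
      have h1 : (Dseg (t + 1) (E2 (k + 2)).length).getD 1 .a = (E2 (k + 2)).getD 1 .a := by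
        rw [h]
      rw [Dseg_getD (by omega)] at h1
      have e : t + 1 - 1 + 1 = t + 1 := by omega
      rw [e, hw'] at h1
      exact h1
    obtain ⟨s, hs⟩ := D_b_odd hb
    have hts : t = 2 * s := by omega
    refine ⟨s, hts, ?_⟩
    rw [hts, hlen2, Dseg_snoc, Dseg_sig, E2_succ] at h
    have h' := (List.append_inj' h rfl).1
    exact sigmaw_injOn (clean_Dseg _ _) hclean1 h'
  · rintro ⟨s, rfl, hs⟩
    rw [hlen2, Dseg_snoc, Dseg_sig, hs, E2_succ]
    congr 1
    have e : 2 * s + 1 - 1 + 2 * (E2 (k + 1)).length = 2 * (s + (E2 (k + 1)).length) := by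
      omega
    rw [e, D_even]

lemma occ_iff (k t : ℕ) :
    Dseg (t + 1) (E2 (k + 1)).length = E2 (k + 1) ↔
      ∃ s, t = 2 ^ k * s ∧ Dseg (s + 1) (E2 1).length = E2 1 := by
  induction k generalizing t with
  | zero =>
    constructor
    · intro h; exact ⟨t, by simp, h⟩
    · rintro ⟨s, rfl, hs⟩; simpa using hs
  | succ k ih =>
    rw [occ_step k t]
    constructor
    · rintro ⟨s, rfl, hs⟩
      obtain ⟨u, rfl, hu⟩ := (ih s).1 hs
      exact ⟨u, by ring, hu⟩
    · rintro ⟨u, rfl, hu⟩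
      exact ⟨2 ^ k * u, by ring, (ih _).2 ⟨u, rfl, hu⟩⟩

lemma occ_char {k t : ℕ} (ht : t ≤ 14 * 2 ^ k) :
    Dseg (t + 1) (E2 (k + 1)).length = E2 (k + 1) ↔
      (t = 2 * 2 ^ k ∨ t = 3 * 2 ^ k ∨ t = 10 * 2 ^ k ∨ t = 11 * 2 ^ k ∨ t = 14 * 2 ^ k) := by
  have hp : (0 : ℕ) < 2 ^ k := Nat.pow_pos (by norm_num)
  rw [occ_iff]
  constructor
  · rintro ⟨s, rfl, hs⟩
    have hs14 : s ≤ 14 := by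
      by_contra hcon
      push_neg at hcon
      have : 2 ^ k * 15 ≤ 2 ^ k * s := Nat.mul_le_mul_left _ (by omega)
      omega
    rcases (occ1_char hs14).1 hs with h | h | h | h | h <;> subst h <;> omega
  · rintro (h | h | h | h | h)
    · exact ⟨2, by omega, (occ1_char (by norm_num)).2 (by tauto)⟩
    · exact ⟨3, by omega, (occ1_char (by norm_num)).2 (by tauto)⟩
    · exact ⟨10, by omega, (occ1_char (by norm_num)).2 (by tauto)⟩
    · exact ⟨11, by omega, (occ1_char (by norm_num)).2 (by tauto)⟩
    · exact ⟨14, by omega, (occ1_char (by norm_num)).2 (by tauto)⟩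

lemma docc_char {k i : ℕ} (hi : i ≤ 14 * 2 ^ k + 1) :
    DOccursAt (E2 (k + 1)) i ↔
      (i = 2 * 2 ^ k + 1 ∨ i = 3 * 2 ^ k + 1 ∨ i = 10 * 2 ^ k + 1 ∨
        i = 11 * 2 ^ k + 1 ∨ i = 14 * 2 ^ k + 1) := by
  have hp : (0 : ℕ) < 2 ^ k := Nat.pow_pos (by norm_num)
  constructor
  · rintro ⟨h1, h2⟩
    obtain ⟨t, rfl⟩ : ∃ t, i = t + 1 := ⟨i - 1, by omega⟩
    have := (occ_char (t := t) (by omega)).1 h2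
    omega
  · intro h
    obtain ⟨t, rfl⟩ : ∃ t, i = t + 1 := ⟨i - 1, by omega⟩
    exact ⟨by omega, (occ_char (by omega)).2 (by omega)⟩

instance (u : List Letter) : DecidablePred (DOccursAt u) := fun i =>
  inferInstanceAs (Decidable (1 ≤ i ∧ Dseg i u.length = u))

lemma count_zero_of {p : ℕ → Prop} [DecidablePred p] {n : ℕ} (h : ∀ i < n, ¬ p i) :
    Nat.count p n = 0 := by
  induction n with
  | zero => rfl
  | succ n ih =>
    rw [Nat.count_succ, ih (fun i hi => h i (by omega)), if_neg (h n (by omega))]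

lemma count_step {p : ℕ → Prop} [DecidablePred p] {a b c : ℕ} (hab : a < b)
    (hca : Nat.count p a = c) (hpa : p a) (h : ∀ i, a < i → i < b → ¬ p i) :
    Nat.count p b = c + 1 := by
  induction b with
  | zero => omega
  | succ n ih =>
    rcases Nat.lt_or_ge a n with h' | h'
    · rw [Nat.count_succ, ih h' (fun i h1 h2 => h i h1 (by omega)),
        if_neg (h n h' (by omega))]
    · have hna : n = a := by omega
      subst hna
      rw [Nat.count_succ, hca, if_pos hpa]

lemma Dseg_block (k j l : ℕ) :
    Dseg (j * 2 ^ k + 1) (l * 2 ^ k) = sigmaw^[k] (Dseg (j + 1) l) := by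
  rw [mul_comm j, mul_comm l, Dseg_sig_iter]

end Aux3


section Main
open Letter List

lemma A_iter1 (k : ℕ) : A (k + 1) = sigmaw^[k] [Letter.a, Letter.b] := by
  rw [A, Function.iterate_succ_apply]; rfl

lemma B_iter1 (k : ℕ) : B (k + 1) = sigmaw^[k] [Letter.a, Letter.a] := by
  rw [B, Function.iterate_succ_apply]; rfl

lemma B_iter2 (k : ℕ) : B (k + 2) = sigmaw^[k] [Letter.a, Letter.b, Letter.a, Letter.b] := by
  rw [B, Function.iterate_add_apply]
  congr 1


end Main

/-- For every m ≥ 1, the first five occurrences of E_{2,m} in D start at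
positions 2^m + 1, 3·2^{m−1} + 1, 5·2^m + 1, 11·2^{m−1} + 1 and 7·2^m + 1; consequently
r_0(E_{2,m}) = A_m, r_1(E_{2,m}) = r_3(E_{2,m}) = A_{m−1},
r_2(E_{2,m}) = A_{m−1} A_m B_{m+1}, and r_4(E_{2,m}) = B_m B_{m−1}. -/
theorem first_occurrences_E2 (m : ℕ) (hm : 1 ≤ m) :
    L (E2 m) 1 = 2 ^ m + 1 ∧ L (E2 m) 2 = 3 * 2 ^ (m - 1) + 1 ∧
    L (E2 m) 3 = 5 * 2 ^ m + 1 ∧ L (E2 m) 4 = 11 * 2 ^ (m - 1) + 1 ∧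
    L (E2 m) 5 = 7 * 2 ^ m + 1 ∧
    r (E2 m) 0 = A m ∧ r (E2 m) 1 = A (m - 1) ∧ r (E2 m) 3 = A (m - 1) ∧
    r (E2 m) 2 = A (m - 1) ++ A m ++ B (m + 1) ∧ r (E2 m) 4 = B m ++ B (m - 1) := by
  obtain ⟨k, rfl⟩ : ∃ k, m = k + 1 := ⟨m - 1, by omega⟩
  have hmk : k + 1 - 1 = k := rfl
  have he : (1 : ℕ) ≤ 2 ^ k := Nat.pow_pos (by norm_num)
  have hpow : (2 : ℕ) ^ (k + 1) = 2 * 2 ^ k := by rw [pow_succ]; ring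
  -- the five occurrences
  have hp0 : DOccursAt (E2 (k + 1)) (2 * 2 ^ k + 1) := (docc_char (by omega)).2 (by omega)
  have hp1 : DOccursAt (E2 (k + 1)) (3 * 2 ^ k + 1) := (docc_char (by omega)).2 (by omega)
  have hp2 : DOccursAt (E2 (k + 1)) (10 * 2 ^ k + 1) := (docc_char (by omega)).2 (by omega)
  have hp3 : DOccursAt (E2 (k + 1)) (11 * 2 ^ k + 1) := (docc_char (by omega)).2 (by omega)
  have hp4 : DOccursAt (E2 (k + 1)) (14 * 2 ^ k + 1) := (docc_char (by omega)).2 (by omega)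
  have hnot : ∀ i, i ≤ 14 * 2 ^ k + 1 → DOccursAt (E2 (k + 1)) i →
      (i = 2 * 2 ^ k + 1 ∨ i = 3 * 2 ^ k + 1 ∨ i = 10 * 2 ^ k + 1 ∨
        i = 11 * 2 ^ k + 1 ∨ i = 14 * 2 ^ k + 1) := fun i hi hpi => (docc_char hi).1 hpi
  -- counts
  have c0 : Nat.count (DOccursAt (E2 (k + 1))) (2 * 2 ^ k + 1) = 0 :=
    count_zero_of (fun i hi hpi => by have := hnot i (by omega) hpi; omega)
  have c1 : Nat.count (DOccursAt (E2 (k + 1))) (3 * 2 ^ k + 1) = 1 :=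
    count_step (by omega) c0 hp0 (fun i h1 h2 hpi => by have := hnot i (by omega) hpi; omega)
  have c2 : Nat.count (DOccursAt (E2 (k + 1))) (10 * 2 ^ k + 1) = 2 :=
    count_step (by omega) c1 hp1 (fun i h1 h2 hpi => by have := hnot i (by omega) hpi; omega)
  have c3 : Nat.count (DOccursAt (E2 (k + 1))) (11 * 2 ^ k + 1) = 3 :=
    count_step (by omega) c2 hp2 (fun i h1 h2 hpi => by have := hnot i (by omega) hpi; omega)
  have c4 : Nat.count (DOccursAt (E2 (k + 1))) (14 * 2 ^ k + 1) = 4 :=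
    count_step (by omega) c3 hp3 (fun i h1 h2 hpi => by have := hnot i (by omega) hpi; omega)
  -- the L-values
  have l1 : L (E2 (k + 1)) 1 = 2 * 2 ^ k + 1 := by
    have h := Nat.nth_count hp0; rw [c0] at h; simpa [L] using h
  have l2 : L (E2 (k + 1)) 2 = 3 * 2 ^ k + 1 := by
    have h := Nat.nth_count hp1; rw [c1] at h; simpa [L] using h
  have l3 : L (E2 (k + 1)) 3 = 10 * 2 ^ k + 1 := by
    have h := Nat.nth_count hp2; rw [c2] at h; simpa [L] using h
  have l4 : L (E2 (k + 1)) 4 = 11 * 2 ^ k + 1 := by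
    have h := Nat.nth_count hp3; rw [c3] at h; simpa [L] using h
  have l5 : L (E2 (k + 1)) 5 = 14 * 2 ^ k + 1 := by
    have h := Nat.nth_count hp4; rw [c4] at h; simpa [L] using h
  -- explicit D values
  obtain ⟨d0,d1,d2,d3,d4,d5,d6,d7,d8,d9,d10,d11,d12,d13,d14,d15⟩ := D_lo
  -- return words
  have r0 : r (E2 (k + 1)) 0 = A (k + 1) := by
    have hr : r (E2 (k + 1)) 0 = Dseg 1 (L (E2 (k + 1)) 1 - 1) := by unfold r; norm_num
    rw [hr, l1, A_iter1, show 2 * 2 ^ k + 1 - 1 = 2 * 2 ^ k from by omega]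
    have e1 : Dseg 1 (2 * 2 ^ k) = Dseg (0 * 2 ^ k + 1) (2 * 2 ^ k) := by norm_num
    rw [e1, Dseg_block k 0 2]
    have hseg : Dseg (0 + 1) 2 = [Letter.a, Letter.b] := by
      rw [show (2 : ℕ) = 1 + 1 from rfl, Dseg_snoc, Dseg_snoc]
      simp [Dseg, d0, d1]
    rw [hseg]
  have r1 : r (E2 (k + 1)) 1 = A k := by
    have hr : r (E2 (k + 1)) 1 = Dseg (L (E2 (k + 1)) 1) (L (E2 (k + 1)) 2 - L (E2 (k + 1)) 1) := by unfold r; norm_num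
    rw [hr, l1, l2,
      show 3 * 2 ^ k + 1 - (2 * 2 ^ k + 1) = 1 * 2 ^ k from by omega,
      Dseg_block k 2 1]
    have hseg : Dseg (2 + 1) 1 = [Letter.a] := by
      rw [show (1 : ℕ) = 0 + 1 from rfl, Dseg_snoc]
      simp [Dseg, d2]
    rw [hseg]; rfl
  have r2 : r (E2 (k + 1)) 2 = A k ++ A (k + 1) ++ B (k + 2) := by
    have hr : r (E2 (k + 1)) 2 = Dseg (L (E2 (k + 1)) 2) (L (E2 (k + 1)) 3 - L (E2 (k + 1)) 2) := by unfold r; norm_num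
    rw [hr, l2, l3,
      show 10 * 2 ^ k + 1 - (3 * 2 ^ k + 1) = 7 * 2 ^ k from by omega,
      Dseg_block k 3 7]
    have hseg : Dseg (3 + 1) 7 =
        [Letter.a, Letter.a, Letter.b, Letter.a, Letter.b, Letter.a, Letter.b] := by
      rw [show (7 : ℕ) = 0+1+1+1+1+1+1+1 from rfl, Dseg_snoc, Dseg_snoc, Dseg_snoc,
        Dseg_snoc, Dseg_snoc, Dseg_snoc, Dseg_snoc]
      simp [Dseg, d3, d4, d5, d6, d7, d8, d9]
    rw [hseg,
      show ([Letter.a, Letter.a, Letter.b, Letter.a, Letter.b, Letter.a, Letter.b] :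
          List Letter) =
        [Letter.a] ++ [Letter.a, Letter.b] ++ [Letter.a, Letter.b, Letter.a, Letter.b]
        from rfl,
      sigmaw_iter_append, sigmaw_iter_append, A_iter1, B_iter2]
    rfl
  have r3 : r (E2 (k + 1)) 3 = A k := by
    have hr : r (E2 (k + 1)) 3 = Dseg (L (E2 (k + 1)) 3) (L (E2 (k + 1)) 4 - L (E2 (k + 1)) 3) := by unfold r; norm_num
    rw [hr, l3, l4,
      show 11 * 2 ^ k + 1 - (10 * 2 ^ k + 1) = 1 * 2 ^ k from by omega,
      Dseg_block k 10 1]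
    have hseg : Dseg (10 + 1) 1 = [Letter.a] := by
      rw [show (1 : ℕ) = 0 + 1 from rfl, Dseg_snoc]
      simp [Dseg, d10]
    rw [hseg]; rfl
  have r4 : r (E2 (k + 1)) 4 = B (k + 1) ++ B k := by
    have hr : r (E2 (k + 1)) 4 = Dseg (L (E2 (k + 1)) 4) (L (E2 (k + 1)) 5 - L (E2 (k + 1)) 4) := by unfold r; norm_num
    rw [hr, l4, l5,
      show 14 * 2 ^ k + 1 - (11 * 2 ^ k + 1) = 3 * 2 ^ k from by omega,
      Dseg_block k 11 3]
    have hseg : Dseg (11 + 1) 3 = [Letter.a, Letter.a, Letter.b] := by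
      rw [show (3 : ℕ) = 0+1+1+1 from rfl, Dseg_snoc, Dseg_snoc, Dseg_snoc]
      simp [Dseg, d11, d12, d13]
    rw [hseg,
      show ([Letter.a, Letter.a, Letter.b] : List Letter) =
        [Letter.a, Letter.a] ++ [Letter.b] from rfl,
      sigmaw_iter_append, B_iter1]
    rfl
  rw [hmk]
  exact ⟨by omega, by omega, by omega, by omega, by omega, r0, r1, r3, r2, r4⟩
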